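/- arXiv:1411.2807 — 2 statements merged into one kernel-verified Lean document; each statement's English description precedes it below -/
import Mathlib

section
/- Let S ≥ 1 and let H : [0,∞) → M_S(ℝ) be continuous with H(t) essentially nonnegative for every t ≥ 0, and let h_*(t) = min_{1≤j≤S} ∑_{i=1}^S H(t)_{ij} be the smallest column sum of H(t). Let x : [0,∞) → ℝ^S be differentiable with x'(t) = H(t)x(t) for all t ≥ 0 and x(0) ≥ 0 componentwise. Then ‖x(t)‖₁ ≥ exp(∫₀ᵗ h_*(τ) dτ) · ‖x(0)‖₁ for all t ≥ 0. -/
open Set Filter Topology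


lemma aux_nonneg (S : ℕ) (hS : 1 ≤ S)
    (H : ℝ → Matrix (Fin S) (Fin S) ℝ)
    (hHcont : ∀ i j, ContinuousOn (fun t => H t i j) (Ici (0 : ℝ)))
    (hHess : ∀ t ∈ Ici (0 : ℝ), ∀ i j, i ≠ j → 0 ≤ H t i j)
    (x : ℝ → Fin S → ℝ)
    (hx : ∀ t ∈ Ici (0 : ℝ), ∀ i,
      HasDerivWithinAt (fun s => x s i) ((H t).mulVec (x t) i) (Ici 0) t)
    (hx0 : ∀ i, 0 ≤ x 0 i) :
    ∀ t ∈ Ici (0 : ℝ), ∀ i, 0 ≤ x t i := by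
  intro T hT i0
  by_contra hneg
  push_neg at hneg
  -- continuity of each component on Ici 0
  have hxc : ∀ i, ContinuousOn (fun s => x s i) (Ici (0:ℝ)) :=
    fun i s hs => (hx s hs i).continuousWithinAt
  -- bound on entries of H on Icc 0 T
  obtain ⟨C, hC⟩ := (isCompact_Icc (a := (0:ℝ)) (b := T)).exists_bound_of_continuousOn
      (f := fun t (p : Fin S × Fin S) => H t p.1 p.2)
      (continuousOn_pi.2 fun p => (hHcont p.1 p.2).mono Icc_subset_Ici_self)
  set C₀ : ℝ := max C 0 with hC₀def
  have hC₀ : ∀ t ∈ Icc (0:ℝ) T, ∀ i j, |H t i j| ≤ C₀ := by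
    intro t ht i j
    have h1 := norm_le_pi_norm (fun p : Fin S × Fin S => H t p.1 p.2) (i, j)
    simp only [Real.norm_eq_abs] at h1
    exact h1.trans ((hC t ht).trans (le_max_left _ _))
  have hC₀0 : 0 ≤ C₀ := le_max_right _ _
  set K : ℝ := S * C₀ + 1 with hKdef
  have hK1 : (1:ℝ) ≤ K := by
    have : 0 ≤ (S:ℝ) * C₀ := mul_nonneg (Nat.cast_nonneg _) hC₀0
    linarith
  have hK0 : 0 < K := by linarith
  -- main positivity claim
  have main : ∀ ε > 0, ∀ t ∈ Icc (0:ℝ) T, ∀ i, 0 < x t i + ε * Real.exp (2*K*t) := by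
    intro ε hε
    by_contra hcon
    push_neg at hcon
    obtain ⟨t₁, ht₁, i₁, hi₁⟩ := hcon
    set u : Fin S → ℝ → ℝ := fun i t => x t i + ε * Real.exp (2*K*t) with hudef
    have huc : ∀ i, ContinuousOn (u i) (Ici (0:ℝ)) := fun i =>
      (hxc i).add (continuousOn_const.mul (Real.continuous_exp.comp
        (continuous_const.mul continuous_id)).continuousOn)
    set A : Set ℝ := ⋃ i, (Icc (0:ℝ) T ∩ (u i) ⁻¹' (Iic 0)) with hAdef
    have hAsub : A ⊆ Icc (0:ℝ) T := by
      intro t ht; simp only [hAdef, mem_iUnion] at ht; obtain ⟨i, hi, _⟩ := ht; exact hi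
    have hAclosed : IsClosed A :=
      isClosed_iUnion_of_finite fun i =>
        ((huc i).mono Icc_subset_Ici_self).preimage_isClosed_of_isClosed isClosed_Icc isClosed_Iic
    have hAne : A.Nonempty := ⟨t₁, mem_iUnion.2 ⟨i₁, ht₁, hi₁⟩⟩
    have hAbdd : BddBelow A := ⟨0, fun t ht => (hAsub ht).1⟩
    set t₀ : ℝ := sInf A with ht₀def
    have ht₀A : t₀ ∈ A := hAclosed.csInf_mem hAne hAbdd
    obtain ⟨i, hi⟩ := mem_iUnion.1 ht₀A
    obtain ⟨ht₀mem, hui⟩ := hi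
    have hui : u i t₀ ≤ 0 := hui
    have ht₀0 : 0 ≤ t₀ := ht₀mem.1
    have ht₀T : t₀ ≤ T := ht₀mem.2
    -- positivity before t₀
    have hpos : ∀ t, 0 ≤ t → t < t₀ → ∀ j, 0 < u j t := by
      intro t h1 h2 j
      by_contra h
      push_neg at h
      have : t ∈ A := mem_iUnion.2 ⟨j, ⟨h1, h2.le.trans ht₀T⟩, h⟩
      exact absurd (csInf_le hAbdd this) (not_le.2 h2)
    -- t₀ > 0
    have ht₀pos : 0 < t₀ := by
      rcases ht₀0.lt_or_eq with h | h
      · exact h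
      · exfalso
        rw [← h] at hui
        have : u i 0 = x 0 i + ε := by simp [hudef]
        rw [this] at hui
        have := hx0 i; linarith
    -- all components nonneg at t₀
    have hge : ∀ j, 0 ≤ u j t₀ := by
      intro j
      have hcl : t₀ ∈ closure (Ico (0:ℝ) t₀) := by
        rw [closure_Ico ht₀pos.ne]; exact ⟨ht₀0, le_rfl⟩
      have hne : (𝓝[Ico (0:ℝ) t₀] t₀).NeBot := mem_closure_iff_nhdsWithin_neBot.1 hcl
      have htend : Filter.Tendsto (u j) (𝓝[Ico (0:ℝ) t₀] t₀) (𝓝 (u j t₀)) :=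
        (huc j t₀ ht₀0).mono Ico_subset_Ici_self
      refine ge_of_tendsto htend ?_
      filter_upwards [self_mem_nhdsWithin] with t ht
      exact (hpos t ht.1 ht.2 j).le
    have hui0 : u i t₀ = 0 := le_antisymm hui (hge i)
    set c : ℝ := ε * Real.exp (2*K*t₀) with hcdef
    have hc0 : 0 < c := mul_pos hε (Real.exp_pos _)
    have hxit₀ : x t₀ i = -c := by
      have := hui0; simp only [hudef] at this; linarith
    have hxjt₀ : ∀ j, -c ≤ x t₀ j := by
      intro j; have := hge j; simp only [hudef] at this; linarith
    -- derivative of u i at t₀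
    have hxd : HasDerivAt (fun s => x s i) ((H t₀).mulVec (x t₀) i) t₀ :=
      (hx t₀ ht₀0 i).hasDerivAt (Ici_mem_nhds ht₀pos)
    have hexp : HasDerivAt (fun s : ℝ => ε * Real.exp (2*K*s))
        (ε * (Real.exp (2*K*t₀) * (2*K))) t₀ := by
      have h1 : HasDerivAt (fun s : ℝ => 2*K*s) (2*K) t₀ := by
        simpa using (hasDerivAt_id t₀).const_mul (2*K)
      exact (h1.exp).const_mul ε
    have hud : HasDerivAt (u i)
        ((H t₀).mulVec (x t₀) i + ε * (Real.exp (2*K*t₀) * (2*K))) t₀ := hxd.add hexp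
    -- estimate the derivative from below
    have hterm : ∀ j, -(C₀ * c) ≤ H t₀ i j * x t₀ j := by
      intro j
      have hb := hC₀ t₀ ⟨ht₀0, ht₀T⟩ i j
      rcases eq_or_ne j i with rfl | hne
      · rw [hxit₀]
        have h1 : H t₀ j j ≤ C₀ := (abs_le.1 hb).2
        nlinarith
      · have h1 : 0 ≤ H t₀ i j := hHess t₀ ht₀0 i j (Ne.symm hne)
        have h2 : H t₀ i j ≤ C₀ := (abs_le.1 hb).2
        nlinarith [hxjt₀ j]
    have hmv : (S:ℝ) * -(C₀ * c) ≤ (H t₀).mulVec (x t₀) i := by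
      have : (H t₀).mulVec (x t₀) i = ∑ j, H t₀ i j * x t₀ j := by
        simp [Matrix.mulVec, dotProduct]
      rw [this]
      calc (S:ℝ) * -(C₀ * c) = ∑ _j : Fin S, -(C₀ * c) := by
            simp [Finset.sum_const, Finset.card_univ, nsmul_eq_mul]
        _ ≤ ∑ j, H t₀ i j * x t₀ j := Finset.sum_le_sum fun j _ => hterm j
    have hdpos : 0 < (H t₀).mulVec (x t₀) i + ε * (Real.exp (2*K*t₀) * (2*K)) := by
      have h2 : ε * (Real.exp (2*K*t₀) * (2*K)) = 2*K*c := by rw [hcdef]; ring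
      have h3 : (S:ℝ) * C₀ = K - 1 := by rw [hKdef]; ring
      nlinarith
    -- contradiction via slope
    have hslope := hasDerivAt_iff_tendsto_slope.1 hud
    have hev : ∀ᶠ t in 𝓝[≠] t₀, 0 < slope (u i) t₀ t :=
      hslope.eventually (eventually_gt_nhds hdpos)
    have hsub : Ioo (0:ℝ) t₀ ⊆ {t₀}ᶜ := fun t ht => by
      simp only [mem_compl_iff, mem_singleton_iff]; exact ht.2.ne
    have hnb : (𝓝[Ioo (0:ℝ) t₀] t₀).NeBot := by
      apply mem_closure_iff_nhdsWithin_neBot.1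
      rw [closure_Ioo ht₀pos.ne]; exact ⟨ht₀0, le_rfl⟩
    have hev2 : ∀ᶠ t in 𝓝[Ioo (0:ℝ) t₀] t₀, 0 < slope (u i) t₀ t :=
      hev.filter_mono (nhdsWithin_mono _ hsub)
    obtain ⟨t, htslope, htmem⟩ := (hev2.and self_mem_nhdsWithin).exists
    have hut : u i t < 0 := by
      have hs : slope (u i) t₀ t = u i t / (t - t₀) := by
        rw [slope_def_field, hui0]; ring_nf
      rw [hs] at htslope
      have hd : t - t₀ < 0 := by linarith [htmem.2]
      rcases div_pos_iff.1 htslope with ⟨_, h⟩ | ⟨h, _⟩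
      · linarith
      · exact h
    exact absurd (hpos t htmem.1.le htmem.2 i) (not_lt.2 hut.le)
  -- let ε → 0
  have hexpT : 0 < Real.exp (2*K*T) := Real.exp_pos _
  set ε : ℝ := -(x T i0) / (2 * Real.exp (2*K*T)) with hεdef
  have hε : 0 < ε := div_pos (by linarith) (by linarith)
  have := main ε hε T ⟨hT, le_rfl⟩ i0
  have hεe : ε * Real.exp (2*K*T) = -(x T i0) / 2 := by
    rw [hεdef]; field_simp
  rw [hεe] at this
  linarith

/-- Lower bound `‖x(t)‖₁ ≥ exp(∫₀ᵗ h₋(τ) dτ) ‖x(0)‖₁` for solutions of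
`x' = H(t)x` with essentially nonnegative `H(t)` and nonnegative initial
condition, where `h₋(t)` is the smallest column sum of `H(t)`. -/
theorem l1_lower_bound_of_nonneg_init
    (S : ℕ) (hS : 1 ≤ S)
    (H : ℝ → Matrix (Fin S) (Fin S) ℝ)
    (hHcont : ∀ i j, ContinuousOn (fun t => H t i j) (Ici (0 : ℝ)))
    (hHess : ∀ t ∈ Ici (0 : ℝ), ∀ i j, i ≠ j → 0 ≤ H t i j)
    (hlow : ℝ → ℝ)
    (hhlow : ∀ t, hlow t = ⨅ j, ∑ i, H t i j)
    (x : ℝ → Fin S → ℝ)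
    (hx : ∀ t ∈ Ici (0 : ℝ), ∀ i,
      HasDerivWithinAt (fun s => x s i) ((H t).mulVec (x t) i) (Ici 0) t)
    (hx0 : ∀ i, 0 ≤ x 0 i) :
    ∀ t ∈ Ici (0 : ℝ),
      Real.exp (∫ τ in (0 : ℝ)..t, hlow τ) * ∑ i, |x 0 i| ≤ ∑ i, |x t i| := by
  intro t ht
  haveI : Nonempty (Fin S) := Fin.pos_iff_nonempty.mp hS
  have hxnn : ∀ s ∈ Ici (0:ℝ), ∀ i, 0 ≤ x s i := aux_nonneg S hS H hHcont hHess x hx hx0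
  set N : ℝ → ℝ := fun s => ∑ i, x s i with hNdef
  have habs : ∀ s ∈ Ici (0:ℝ), ∑ i, |x s i| = N s := fun s hs =>
    Finset.sum_congr rfl fun i _ => abs_of_nonneg (hxnn s hs i)
  rw [habs t ht, habs 0 self_mem_Ici]
  -- continuity of hlow on Ici 0
  have hlowcont : ContinuousOn hlow (Ici (0:ℝ)) := by
    have heq : hlow = fun t => Finset.univ.inf' Finset.univ_nonempty
        (fun j => ∑ i, H t i j) := by
      funext s
      rw [hhlow s, Finset.inf'_univ_eq_ciInf]
    rw [heq]
    exact ContinuousOn.finset_inf'_apply _ fun j _ =>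
      continuousOn_finset_sum _ fun i _ => hHcont i j
  set F : ℝ → ℝ := fun s => ∫ τ in (0:ℝ)..s, hlow τ with hFdef
  have hFint : ∀ s ∈ Ici (0:ℝ), IntervalIntegrable hlow MeasureTheory.volume 0 s := by
    intro s hs
    apply ContinuousOn.intervalIntegrable
    apply hlowcont.mono
    rw [uIcc_of_le hs]
    exact Icc_subset_Ici_self
  have hFderiv : ∀ s ∈ Ici (0:ℝ), HasDerivWithinAt F (hlow s) (Ici 0) s := by
    intro s hs
    rcases eq_or_lt_of_le (mem_Ici.1 hs) with h | h
    · subst h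
      exact intervalIntegral.integral_hasDerivWithinAt_right (hFint 0 self_mem_Ici)
        ((hlowcont.mono Ioi_subset_Ici_self).stronglyMeasurableAtFilter_nhdsWithin
          measurableSet_Ioi 0)
        ((hlowcont 0 self_mem_Ici).mono Ioi_subset_Ici_self)
    · have hmem : Ici (0:ℝ) ∈ 𝓝 s := Ici_mem_nhds h
      have hmeas : StronglyMeasurableAtFilter hlow (𝓝 s) MeasureTheory.volume :=
        ⟨Ici 0, hmem, hlowcont.aestronglyMeasurable measurableSet_Ici⟩
      exact (intervalIntegral.integral_hasDerivAt_right (hFint s hs) hmeas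
        ((hlowcont s hs).continuousAt hmem)).hasDerivWithinAt
  set D : ℝ → ℝ := fun s => ∑ i, (H s).mulVec (x s) i with hDdef
  have hNderiv : ∀ s ∈ Ici (0:ℝ), HasDerivWithinAt N (D s) (Ici 0) s := by
    intro s hs
    exact HasDerivWithinAt.fun_sum fun i _ => hx s hs i
  -- key inequality
  have hkey : ∀ s ∈ Ici (0:ℝ), hlow s * N s ≤ D s := by
    intro s hs
    have hD : D s = ∑ j, (∑ i, H s i j) * x s j := by
      simp only [hDdef, Matrix.mulVec, dotProduct]
      rw [Finset.sum_comm]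
      exact Finset.sum_congr rfl fun j _ => (Finset.sum_mul _ _ _).symm
    rw [hD, hNdef, Finset.mul_sum]
    apply Finset.sum_le_sum
    intro j _
    apply mul_le_mul_of_nonneg_right _ (hxnn s hs j)
    rw [hhlow s]
    exact ciInf_le (Set.Finite.bddBelow (Set.finite_range _)) j
  -- monotonicity of g = exp(-F) * N
  set g : ℝ → ℝ := fun s => Real.exp (-F s) * N s with hgdef
  set g' : ℝ → ℝ := fun s =>
    -hlow s * Real.exp (-F s) * N s + Real.exp (-F s) * D s with hg'def
  have hgderiv : ∀ s ∈ Ici (0:ℝ), HasDerivWithinAt g (g' s) (Ici 0) s := by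
    intro s hs
    have h1 : HasDerivWithinAt (fun r => Real.exp (-F r)) (-hlow s * Real.exp (-F s))
        (Ici 0) s := by
      have := ((hFderiv s hs).neg).exp
      simpa [mul_comm] using this
    simpa [hg'def] using h1.fun_mul (hNderiv s hs)
  have hg'nonneg : ∀ s ∈ Ici (0:ℝ), 0 ≤ g' s := by
    intro s hs
    have h1 := hkey s hs
    have h2 : (0:ℝ) < Real.exp (-F s) := Real.exp_pos _
    simp only [hg'def]
    nlinarith
  have hmono : MonotoneOn g (Ici (0:ℝ)) := by
    apply monotoneOn_of_hasDerivWithinAt_nonneg (convex_Ici 0)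
      (fun s hs => (hgderiv s hs).continuousWithinAt)
      (f' := g')
    · intro s hs
      rw [interior_Ici] at hs ⊢
      exact ((hgderiv s (mem_Ici.2 (le_of_lt hs))).hasDerivAt (Ici_mem_nhds hs)).hasDerivWithinAt
    · intro s hs
      rw [interior_Ici] at hs
      exact hg'nonneg s (mem_Ici.2 (le_of_lt hs))
  have hg0 : g 0 = N 0 := by
    simp [hgdef, hFdef, intervalIntegral.integral_same]
  have := hmono self_mem_Ici ht ht
  rw [hg0] at this
  -- conclude
  have hexp : Real.exp (F t) * Real.exp (-F t) = 1 := by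
    rw [← Real.exp_add]; simp
  calc Real.exp (F t) * N 0 ≤ Real.exp (F t) * (Real.exp (-F t) * N t) := by
        apply mul_le_mul_of_nonneg_left this (Real.exp_pos _).le
    _ = (Real.exp (F t) * Real.exp (-F t)) * N t := by ring
    _ = N t := by rw [hexp, one_mul]
end

section
/- (Column sums of the transformed matrix for a pure birth–death process, formula (403) with ξ ≡ 0.) In the BDCP setting with all catastrophe rates ξ_k ≡ 0, the negative column sums of H(t) := D B(t) D⁻¹ are given, for 1 ≤ k ≤ S, by −∑_{i=1}^S H(t)_{ik} = λ_{k−1}(t) + μ_k(t) − (d_{k+1}/d_k) λ_k(t) − (d_{k−1}/d_k) μ_{k−1}(t), where for k = 1 the term (d_0/d_1)μ_0 is absent (μ_0 ≡ 0) and for k = S the term (d_{S+1}/d_S)λ_S is absent (λ_S ≡ 0). -/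
open Set

/-- The reduced matrix `B(t)` of a finite birth–death–catastrophe process
(1-based indices `1,…,S` encoded by `i : Fin S ↦ i+1`). -/
def bdcpB (S : ℕ) (lam mu xi : ℕ → ℝ → ℝ) (t : ℝ) : Matrix (Fin S) (Fin S) ℝ :=
  fun i j =>
    (if (i : ℕ) = (j : ℕ) + 1 then lam (i : ℕ) t
     else if (j : ℕ) = (i : ℕ) + 1 then mu ((i : ℕ) + 2) t
     else if i = j then -(lam ((i : ℕ) + 1) t + mu ((i : ℕ) + 1) t + xi ((i : ℕ) + 1) t)
     else 0)
    - (if (i : ℕ) = 0 then lam 0 t else 0)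

/-- The upper-triangular matrix `D` with `D_{kj} = d_k` for `j ≥ k`. -/
def triD (S : ℕ) (d : ℕ → ℝ) : Matrix (Fin S) (Fin S) ℝ :=
  fun i j => if i ≤ j then d ((i : ℕ) + 1) else 0

noncomputable def bdDinv (S : ℕ) (d : ℕ → ℝ) : Matrix (Fin S) (Fin S) ℝ :=
  fun i j => (if (i : ℕ) = (j : ℕ) then 1 else if (j : ℕ) = (i : ℕ) + 1 then -1 else 0)
    / d ((j : ℕ) + 1)

lemma sum_fin_ite (S c : ℕ) (f : Fin S → ℝ) :
    ∑ l : Fin S, (if (l : ℕ) = c then f l else 0) = if h : c < S then f ⟨c, h⟩ else 0 := by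
  split
  next h =>
    rw [Finset.sum_eq_single (⟨c, h⟩ : Fin S)]
    · simp
    · intro b _ hb; rw [if_neg]; intro hc; exact hb (Fin.ext hc)
    · simp
  next h =>
    apply Finset.sum_eq_zero
    intro l _
    rw [if_neg]
    intro hc
    exact h (hc ▸ l.isLt)

lemma bdDinv_left_inv (S : ℕ) (d : ℕ → ℝ) (hd : ∀ m, 1 ≤ m → m ≤ S → d m ≠ 0) :
    bdDinv S d * triD S d = 1 := by
  ext i j
  rw [Matrix.mul_apply]
  have key : ∀ l : Fin S, bdDinv S d i l * triD S d l j =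
      (if (l : ℕ) = (i : ℕ) then (if (i : ℕ) ≤ (j : ℕ) then 1 else 0) else 0)
      + (if (l : ℕ) = (i : ℕ) + 1 then (if (l : ℕ) ≤ (j : ℕ) then -1 else 0) else 0) := by
    intro l
    have hdl : d ((l : ℕ) + 1) ≠ 0 := hd _ (by omega) (by omega)
    simp only [bdDinv, triD, Fin.le_def]
    split_ifs <;> first | (exfalso; omega) | (field_simp <;> ring1)
  rw [Finset.sum_congr rfl (fun l _ => key l), Finset.sum_add_distrib,
    sum_fin_ite, sum_fin_ite]
  have hj := j.isLt
  have hi := i.isLt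
  simp only [Matrix.one_apply, Fin.ext_iff]
  split_ifs <;> simp_all <;> omega

lemma colsum_triD (S : ℕ) (d : ℕ → ℝ) (j : Fin S) :
    ∑ i : Fin S, triD S d i j = ∑ m ∈ Finset.range ((j : ℕ) + 1), d (m + 1) := by
  have h2 : ∑ i : Fin S, triD S d i j
      = ∑ m ∈ Finset.range S, (if m ≤ (j : ℕ) then d (m + 1) else 0) := by
    rw [← Fin.sum_univ_eq_sum_range (fun m => if m ≤ (j : ℕ) then d (m + 1) else 0) S]
    exact Finset.sum_congr rfl fun i _ => by simp only [triD, Fin.le_def]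
  rw [h2]
  rw [← Finset.sum_subset (Finset.range_subset_range.2 (by omega : (j : ℕ) + 1 ≤ S))]
  · exact Finset.sum_congr rfl (fun m hm => if_pos (by simp at hm; omega))
  · intro x _ hx
    rw [if_neg]; simp at hx; omega

lemma v_formula (S : ℕ) (hS : 1 ≤ S) (lam mu : ℕ → ℝ → ℝ) (d : ℕ → ℝ) (t : ℝ)
    (hlamS : lam S t = 0) (l : Fin S) :
    ∑ j : Fin S, (∑ m ∈ Finset.range ((j : ℕ) + 1), d (m + 1))
        * bdcpB S lam mu (fun _ _ => 0) t j l
      = d ((l : ℕ) + 2) * lam ((l : ℕ) + 1) t - d ((l : ℕ) + 1) * mu ((l : ℕ) + 1) t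
        - d 1 * lam 0 t := by
  set u : ℕ → ℝ := fun n => ∑ m ∈ Finset.range (n + 1), d (m + 1) with hu
  have hurec : ∀ n, u (n + 1) = u n + d (n + 2) := by
    intro n; simp [hu, Finset.sum_range_succ]
  have e0 : u 0 = d 1 := by simp [hu]
  have hsplit : ∀ j : Fin S, u (j : ℕ) * bdcpB S lam mu (fun _ _ => 0) t j l =
      (if (j : ℕ) = (l : ℕ) + 1 then u (j : ℕ) * lam (j : ℕ) t else 0)
      + (if (j : ℕ) = (l : ℕ) then
          -(u (j : ℕ) * (lam ((j : ℕ) + 1) t + mu ((j : ℕ) + 1) t)) else 0)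
      + (if (j : ℕ) = (l : ℕ) - 1 then
          (if 1 ≤ (l : ℕ) then u (j : ℕ) * mu ((l : ℕ) + 1) t else 0) else 0)
      + (if (j : ℕ) = 0 then -(u (j : ℕ) * lam 0 t) else 0) := by
    intro j
    simp only [bdcpB, Fin.ext_iff]
    split_ifs <;>
      first
        | (exfalso; omega)
        | ring1
        | (rw [show (j : ℕ) + 2 = (l : ℕ) + 1 from by omega]; ring1)
  rw [Finset.sum_congr rfl (fun j _ => hsplit j), Finset.sum_add_distrib,
    Finset.sum_add_distrib, Finset.sum_add_distrib, sum_fin_ite, sum_fin_ite,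
    sum_fin_ite, sum_fin_ite]
  have hl := l.isLt
  rw [dif_pos hl, dif_pos (by omega : (l : ℕ) - 1 < S), dif_pos (by omega : 0 < S)]
  have e2 : 1 ≤ (l : ℕ) → u ((l : ℕ) - 1) = u (l : ℕ) - d ((l : ℕ) + 1) := by
    intro h2
    have h3 := hurec ((l : ℕ) - 1)
    rw [show (l : ℕ) - 1 + 1 = (l : ℕ) from by omega,
      show (l : ℕ) - 1 + 2 = (l : ℕ) + 1 from by omega] at h3
    linarith
  by_cases h1 : (l : ℕ) + 1 < S
  · rw [dif_pos h1]
    by_cases h2 : 1 ≤ (l : ℕ)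
    · rw [if_pos h2]
      simp only [hurec (l : ℕ), e2 h2, e0]
      ring
    · have hl0 : (l : ℕ) = 0 := by omega
      rw [if_neg h2]
      simp only [hl0]
      have h3 := hurec 0
      norm_num at h3 ⊢
      rw [h3, e0]
      ring
  · have hz : lam ((l : ℕ) + 1) t = 0 := by
      rw [show (l : ℕ) + 1 = S from by omega]; exact hlamS
    rw [dif_neg h1]
    by_cases h2 : 1 ≤ (l : ℕ)
    · rw [if_pos h2]
      simp only [e2 h2, e0, hz]
      ring
    · have hl0 : (l : ℕ) = 0 := by omega
      rw [if_neg h2]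
      simp only [hl0] at hz ⊢
      rw [hz, e0]
      ring


/-- Column sums of `H(t) = D B(t) D⁻¹` for a pure birth–death process
(formula (403) of the paper with `ξ ≡ 0`): for `1 ≤ k ≤ S` (here `k = (k₀:ℕ)+1`
for `k₀ : Fin S`),
`−∑ᵢ H(t)ᵢₖ = λ_{k−1} + μ_k − (d_{k+1}/d_k) λ_k − (d_{k−1}/d_k) μ_{k−1}`;
the boundary terms vanish since `μ₀ ≡ 0` and `λ_S ≡ 0`. -/
theorem bd_transformed_matrix_column_sums
    (S : ℕ) (hS : 1 ≤ S)
    (lam mu : ℕ → ℝ → ℝ) (d : ℕ → ℝ)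
    (hlam : ∀ k < S, ContinuousOn (lam k) (Ici 0) ∧ ∀ t ∈ Ici (0 : ℝ), 0 ≤ lam k t)
    (hmu : ∀ k, 1 ≤ k → k ≤ S →
      ContinuousOn (mu k) (Ici 0) ∧ ∀ t ∈ Ici (0 : ℝ), 0 ≤ mu k t)
    (hlamS : ∀ t, lam S t = 0) (hmu0 : ∀ t, mu 0 t = 0)
    (hd : ∀ k, 1 ≤ k → k ≤ S → 0 < d k)
    (H : ℝ → Matrix (Fin S) (Fin S) ℝ)
    (hH : ∀ t, H t = triD S d * bdcpB S lam mu (fun _ _ => 0) t * (triD S d)⁻¹) :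
    ∀ t ∈ Ici (0 : ℝ), ∀ k : Fin S,
      -∑ i, H t i k =
        lam (k : ℕ) t + mu ((k : ℕ) + 1) t
          - d ((k : ℕ) + 2) / d ((k : ℕ) + 1) * lam ((k : ℕ) + 1) t
          - d (k : ℕ) / d ((k : ℕ) + 1) * mu (k : ℕ) t := by
  intro t ht k
  have hdne : ∀ m, 1 ≤ m → m ≤ S → d m ≠ 0 := fun m h1 h2 => ne_of_gt (hd m h1 h2)
  have hinv : (triD S d)⁻¹ = bdDinv S d := Matrix.inv_eq_left_inv (bdDinv_left_inv S d hdne)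
  have hk := k.isLt
  have hdk : d ((k : ℕ) + 1) ≠ 0 := hdne _ (by omega) (by omega)
  set B := bdcpB S lam mu (fun _ _ => 0) t with hB
  have step1 : ∑ i, H t i k
      = ∑ l : Fin S, (∑ i : Fin S, (triD S d * B) i l) * bdDinv S d l k := by
    have : ∀ i, H t i k = ∑ l, (triD S d * B) i l * bdDinv S d l k := by
      intro i; rw [hH, hinv, Matrix.mul_apply]
    rw [Finset.sum_congr rfl (fun i _ => this i), Finset.sum_comm]
    exact Finset.sum_congr rfl (fun l _ => (Finset.sum_mul _ _ _).symm)
  have step2 : ∀ l : Fin S, ∑ i : Fin S, (triD S d * B) i l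
      = d ((l : ℕ) + 2) * lam ((l : ℕ) + 1) t - d ((l : ℕ) + 1) * mu ((l : ℕ) + 1) t
        - d 1 * lam 0 t := by
    intro l
    have h3 : ∑ i : Fin S, (triD S d * B) i l
        = ∑ j : Fin S, (∑ i : Fin S, triD S d i j) * B j l := by
      have : ∀ i, (triD S d * B) i l = ∑ j, triD S d i j * B j l := by
        intro i; rw [Matrix.mul_apply]
      rw [Finset.sum_congr rfl (fun i _ => this i), Finset.sum_comm]
      exact Finset.sum_congr rfl (fun j _ => (Finset.sum_mul _ _ _).symm)
    rw [h3, Finset.sum_congr rfl (fun j _ => by rw [colsum_triD])]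
    exact v_formula S hS lam mu d t (hlamS t) l
  have hcol : ∀ (v : ℝ) (l : Fin S), v * bdDinv S d l k =
      (if (l : ℕ) = (k : ℕ) then v * (1 / d ((k : ℕ) + 1)) else 0)
      + (if (l : ℕ) = (k : ℕ) - 1 then
          (if 1 ≤ (k : ℕ) then v * (-1 / d ((k : ℕ) + 1)) else 0) else 0) := by
    intro v l
    simp only [bdDinv]
    split_ifs <;> first | (exfalso; omega) | ring1
  rw [step1, Finset.sum_congr rfl (fun l _ => by rw [step2 l, hcol _ l]),
    Finset.sum_add_distrib, sum_fin_ite, sum_fin_ite, dif_pos hk,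
    dif_pos (by omega : (k : ℕ) - 1 < S)]
  simp only [Fin.val_mk]
  by_cases hk1 : 1 ≤ (k : ℕ)
  · rw [if_pos hk1, show (k : ℕ) - 1 + 2 = (k : ℕ) + 1 from by omega,
      show (k : ℕ) - 1 + 1 = (k : ℕ) from by omega]
    field_simp
    ring
  · rw [if_neg hk1]
    have hk0 : (k : ℕ) = 0 := by omega
    simp only [hk0, hmu0 t]
    have hd1 : d 1 ≠ 0 := hdne 1 le_rfl hS
    field_simp
    ring
end
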